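/- Let p, q, a, b be positive integers with 0 < a < p, 0 < b < q, and b·p − a·q = ±1. Then the only points of ℤ² contained in the closed quadrilateral with vertices (p,0), (p−a, b), (0, q), (a, q−b) are these four vertices. -/
import Mathlib


/-- the only lattice points in the closed quadrilateral with vertices
`(p,0), (p-a,b), (0,q), (a,q-b)` (where `b*p - a*q = ±1`) are the four vertices. -/
theorem stmt1 (p q a b : ℤ) (ha0 : 0 < a) (hap : a < p) (hb0 : 0 < b) (hbq : b < q)
    (huni : b * p - a * q = 1 ∨ b * p - a * q = -1) :
    ∀ z : ℤ × ℤ,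
      ((z.1 : ℝ), (z.2 : ℝ)) ∈
        convexHull ℝ
          ({((p : ℝ), (0 : ℝ)), (((p - a : ℤ) : ℝ), (b : ℝ)), ((0 : ℝ), (q : ℝ)),
            ((a : ℝ), ((q - b : ℤ) : ℝ))} : Set (ℝ × ℝ)) →
      z = (p, 0) ∨ z = (p - a, b) ∨ z = (0, q) ∨ z = (a, q - b) := by
  intro z hz
  obtain ⟨x, y⟩ := z
  set e : ℤ := b * p - a * q with he_def
  have he : e * e = 1 := by rcases huni with h | h <;> rw [h] <;> norm_num
  have heR : ((e : ℝ)) * e = 1 := by exact_mod_cast he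
  have heD : (e : ℝ) = (b : ℝ) * p - a * q := by rw [he_def]; push_cast; ring
  set fr : ℝ × ℝ → ℝ := fun w => (e : ℝ) * ((q - b) * w.1 + (p - a) * w.2) with hfr
  set gr : ℝ × ℝ → ℝ := fun w => (e : ℝ) * (-(b : ℝ) * w.1 - a * w.2) with hgr
  set c1 : ℝ := (e : ℝ) * ((q - b) * p) with hc1
  set c2 : ℝ := (e : ℝ) * (-(b : ℝ) * p) with hc2
  set C : Set (ℝ × ℝ) := {w | (c1 ≤ fr w ∧ fr w ≤ c1 + 1) ∧ (c2 ≤ gr w ∧ gr w ≤ c2 + 1)}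
    with hC_def
  have hConv : Convex ℝ C := by
    intro u hu v hv s t hs ht hst
    obtain ⟨⟨hu1, hu2⟩, hu3, hu4⟩ := hu
    obtain ⟨⟨hv1, hv2⟩, hv3, hv4⟩ := hv
    have h1 : (s • u + t • v).1 = s * u.1 + t * v.1 := rfl
    have h2 : (s • u + t • v).2 = s * u.2 + t * v.2 := rfl
    have hfe : fr (s • u + t • v) = s * fr u + t * fr v := by
      simp only [hfr, h1, h2]; ring
    have hge : gr (s • u + t • v) = s * gr u + t * gr v := by
      simp only [hgr, h1, h2]; ring
    have e1 : s * c1 + t * c1 = c1 := by rw [← add_mul, hst, one_mul]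
    have e1' : s * (c1 + 1) + t * (c1 + 1) = c1 + 1 := by rw [← add_mul, hst, one_mul]
    have e2 : s * c2 + t * c2 = c2 := by rw [← add_mul, hst, one_mul]
    have e2' : s * (c2 + 1) + t * (c2 + 1) = c2 + 1 := by rw [← add_mul, hst, one_mul]
    refine ⟨⟨?_, ?_⟩, ?_, ?_⟩
    · rw [hfe]
      have := mul_le_mul_of_nonneg_left hu1 hs
      have := mul_le_mul_of_nonneg_left hv1 ht
      linarith
    · rw [hfe]
      have := mul_le_mul_of_nonneg_left hu2 hs
      have := mul_le_mul_of_nonneg_left hv2 ht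
      linarith
    · rw [hge]
      have := mul_le_mul_of_nonneg_left hu3 hs
      have := mul_le_mul_of_nonneg_left hv3 ht
      linarith
    · rw [hge]
      have := mul_le_mul_of_nonneg_left hu4 hs
      have := mul_le_mul_of_nonneg_left hv4 ht
      linarith
  have hSC : ({((p : ℝ), (0 : ℝ)), (((p - a : ℤ) : ℝ), (b : ℝ)), ((0 : ℝ), (q : ℝ)),
      ((a : ℝ), ((q - b : ℤ) : ℝ))} : Set (ℝ × ℝ)) ⊆ C := by
    have m1 : (((p : ℝ), (0 : ℝ)) : ℝ × ℝ) ∈ C := by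
      have h1 : fr ((p : ℝ), (0 : ℝ)) = c1 := by simp only [hfr, hc1]; ring
      have h2 : gr ((p : ℝ), (0 : ℝ)) = c2 := by simp only [hgr, hc2]; ring
      exact ⟨⟨le_of_eq h1.symm, by rw [h1]; linarith⟩,
             ⟨le_of_eq h2.symm, by rw [h2]; linarith⟩⟩
    have m2 : (((((p - a : ℤ)) : ℝ), (b : ℝ)) : ℝ × ℝ) ∈ C := by
      have h1 : fr (((p - a : ℤ) : ℝ), (b : ℝ)) = c1 + 1 := by
        simp only [hfr, hc1]; push_cast; linear_combination heR - (e : ℝ) * heD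
      have h2 : gr (((p - a : ℤ) : ℝ), (b : ℝ)) = c2 := by
        simp only [hgr, hc2]; push_cast; ring
      exact ⟨⟨by rw [h1]; linarith, le_of_eq h1⟩,
             ⟨le_of_eq h2.symm, by rw [h2]; linarith⟩⟩
    have m3 : (((0 : ℝ), (q : ℝ)) : ℝ × ℝ) ∈ C := by
      have h1 : fr ((0 : ℝ), (q : ℝ)) = c1 + 1 := by
        simp only [hfr, hc1]; push_cast; linear_combination heR - (e : ℝ) * heD
      have h2 : gr ((0 : ℝ), (q : ℝ)) = c2 + 1 := by
        simp only [hgr, hc2]; push_cast; linear_combination heR - (e : ℝ) * heD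
      exact ⟨⟨by rw [h1]; linarith, le_of_eq h1⟩,
             ⟨by rw [h2]; linarith, le_of_eq h2⟩⟩
    have m4 : (((a : ℝ), ((q - b : ℤ) : ℝ)) : ℝ × ℝ) ∈ C := by
      have h1 : fr ((a : ℝ), ((q - b : ℤ) : ℝ)) = c1 := by
        simp only [hfr, hc1]; push_cast; ring
      have h2 : gr ((a : ℝ), ((q - b : ℤ) : ℝ)) = c2 + 1 := by
        simp only [hgr, hc2]; push_cast; linear_combination heR - (e : ℝ) * heD
      exact ⟨⟨le_of_eq h1.symm, by rw [h1]; linarith⟩,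
             ⟨by rw [h2]; linarith, le_of_eq h2⟩⟩
    intro w hw
    simp only [Set.mem_insert_iff, Set.mem_singleton_iff] at hw
    rcases hw with h | h | h | h <;> subst h
    exacts [m1, m2, m3, m4]
  have hzC : (((x : ℝ), (y : ℝ)) : ℝ × ℝ) ∈ C := convexHull_min hSC hConv hz
  obtain ⟨⟨hf1, hf2⟩, hg1, hg2⟩ := hzC
  set L : ℤ := e * ((q - b) * x + (p - a) * y) - e * ((q - b) * p) with hL
  set M : ℤ := e * (-b * x - a * y) + e * (b * p) with hM
  have hLr : (L : ℝ) = fr ((x : ℝ), (y : ℝ)) - c1 := by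
    rw [hL, hfr, hc1]; push_cast; ring
  have hMr : (M : ℝ) = gr ((x : ℝ), (y : ℝ)) - c2 := by
    rw [hM, hgr, hc2]; push_cast; ring
  have hL01 : L = 0 ∨ L = 1 := by
    have h0 : (0 : ℝ) ≤ (L : ℝ) := by rw [hLr]; linarith
    have h1 : (L : ℝ) ≤ 1 := by rw [hLr]; linarith
    have h0' : (0 : ℤ) ≤ L := by exact_mod_cast h0
    have h1' : L ≤ 1 := by exact_mod_cast h1
    omega
  have hM01 : M = 0 ∨ M = 1 := by
    have h0 : (0 : ℝ) ≤ (M : ℝ) := by rw [hMr]; linarith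
    have h1 : (M : ℝ) ≤ 1 := by rw [hMr]; linarith
    have h0' : (0 : ℤ) ≤ M := by exact_mod_cast h0
    have h1' : M ≤ 1 := by exact_mod_cast h1
    omega
  have hx : x = p - a * L + (a - p) * M := by
    rw [hL, hM]; linear_combination (p - x) * he
  have hy : y = b * L + (q - b) * M := by
    rw [hL, hM]; linear_combination (-y) * he
  rcases hL01 with h | h <;> rcases hM01 with h' | h' <;> rw [h, h'] at hx hy <;>
    simp only [Prod.mk.injEq] <;> omega
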